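/- For natural numbers k, m ≥ 2, the necklace polynomial satisfies m · M(k,m) > k^m − k^(⌊m/2⌋+1). -/

import Mathlib

open Finset

/-- The necklace polynomial `M(k,m) = (1/m) · Σ_{d ∣ m} μ(m/d) k^d` (as a rational number). -/
noncomputable def necklacePoly (k m : ℕ) : ℚ :=
  (∑ d ∈ m.divisors, (ArithmeticFunction.moebius (m / d) : ℚ) * (k : ℚ) ^ d) / m

lemma geom_lt' (k : ℕ) (hk : 2 ≤ k) : ∀ n : ℕ, ∑ i ∈ range n, (k : ℚ) ^ i < (k : ℚ) ^ n := by
  intro n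
  induction n with
  | zero => simp
  | succ n ih =>
    rw [Finset.sum_range_succ, pow_succ]
    have hk2 : (2 : ℚ) ≤ (k : ℚ) := by exact_mod_cast hk
    have hpos : (0 : ℚ) < (k : ℚ) ^ n := by positivity
    nlinarith

/-- For `k, m ≥ 2`, we have `m · M(k,m) > k^m − k^(⌊m/2⌋+1)`. -/
theorem mul_necklacePoly_gt (k m : ℕ) (hk : 2 ≤ k) (hm : 2 ≤ m) :
    (m : ℚ) * necklacePoly k m > (k : ℚ) ^ m - (k : ℚ) ^ (m / 2 + 1) := by
  have hm0 : (m : ℚ) ≠ 0 := by positivity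
  rw [necklacePoly, mul_div_cancel₀ _ hm0]
  have hmem : m ∈ m.divisors := Nat.mem_divisors_self m (by omega)
  rw [← Finset.add_sum_erase _ _ hmem, Nat.div_self (by omega)]
  simp only [ArithmeticFunction.moebius_apply_one, Int.cast_one, one_mul]
  -- bound the tail sum
  set S := ∑ d ∈ (m.divisors).erase m, (ArithmeticFunction.moebius (m / d) : ℚ) * (k : ℚ) ^ d
    with hS
  have habs : |S| ≤ ∑ d ∈ (m.divisors).erase m, (k : ℚ) ^ d := by
    refine (Finset.abs_sum_le_sum_abs _ _).trans ?_
    refine Finset.sum_le_sum fun d hd => ?_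
    rw [abs_mul]
    have h1 : |(ArithmeticFunction.moebius (m / d) : ℚ)| ≤ 1 := by
      have := ArithmeticFunction.abs_moebius_le_one (n := m / d)
      calc |(ArithmeticFunction.moebius (m / d) : ℚ)|
          = (|ArithmeticFunction.moebius (m / d)| : ℤ) := by push_cast; rfl
        _ ≤ 1 := by exact_mod_cast this
    have h2 : |(k : ℚ) ^ d| = (k : ℚ) ^ d := abs_of_nonneg (by positivity)
    rw [h2]
    nlinarith [pow_nonneg (by positivity : (0:ℚ) ≤ (k:ℚ)) d]
  have hsub : (m.divisors).erase m ⊆ range (m / 2 + 1) := by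
    intro d hd
    rw [Finset.mem_erase, Nat.mem_divisors] at hd
    obtain ⟨hne, hdvd, _⟩ := hd
    obtain ⟨c, hc⟩ := hdvd
    have hc2 : 2 ≤ c := by
      rcases c with _ | _ | c
      · omega
      · omega
      · omega
    have : d * 2 ≤ m := by nlinarith
    rw [Finset.mem_range]
    omega
  have hle : ∑ d ∈ (m.divisors).erase m, (k : ℚ) ^ d ≤ ∑ d ∈ range (m / 2 + 1), (k : ℚ) ^ d :=
    Finset.sum_le_sum_of_subset_of_nonneg hsub (fun i _ _ => by positivity)
  have := geom_lt' k hk (m / 2 + 1)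
  have hS' : -((k : ℚ) ^ (m / 2 + 1)) < S := by
    have := neg_abs_le S
    linarith
  linarith
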